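/- Let $F : \mathbb{R}^n \to \mathbb{R}$ be differentiable with $L$-Lipschitz gradient and bounded below by $F_*$. Let $0 < \gamma_2 < \gamma_1$, $\alpha < \frac{\gamma_2}{2\gamma_1^2 L}$, and let $(x_k)$ be TRish iterates with stochastic gradients satisfying $\mathbb{E}_k[g_k] = \nabla F(x_k)$ and $\mathbb{E}_k[\|\nabla F(x_k) - g_k\|^2] < M_g$. Then with $\beta = \frac{\gamma_1^2 - \gamma_2^2}{2\gamma_2} + \tfrac{1}{2}\alpha\gamma_1^2 L$, for every $K \ge 1$: $\mathbb{E}\left[\frac{1}{K}\sum_{k=1}^K \|\nabla F(x_k)\|^2\right] \le \frac{4(F(x_1) - F_*)}{K\alpha\gamma_2} + \frac{4\beta M_g}{\gamma_2}$. -/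

import Mathlib

set_option maxHeartbeats 1000000

open MeasureTheory RealInnerProductSpace

section Aux

lemma descent_lemma {n : ℕ} (F : EuclideanSpace ℝ (Fin n) → ℝ)
    (F' : EuclideanSpace ℝ (Fin n) → EuclideanSpace ℝ (Fin n)) (L : ℝ) (hL : 0 ≤ L)
    (hgrad : ∀ y, HasGradientAt F (F' y) y)
    (hlip : LipschitzWith (Real.toNNReal L) F') (x v : EuclideanSpace ℝ (Fin n)) :
    F (x + v) ≤ F x + ⟪F' x, v⟫ + L / 2 * ‖v‖ ^ 2 := by
  have hc : Continuous F' := hlip.continuous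
  have line : ∀ t : ℝ, HasDerivAt (fun s : ℝ => F (x + s • v)) ⟪F' (x + t • v), v⟫ t := by
    intro t
    have hcurve : HasDerivAt (fun s : ℝ => x + s • v) v t := by
      simpa using ((hasDerivAt_id t).smul_const v).const_add x
    have := ((hgrad (x + t • v)).hasFDerivAt).comp_hasDerivAt t hcurve
    simp at this; exact this
  have hcont : Continuous fun t : ℝ => ⟪F' (x + t • v), v⟫ := by
    exact (hc.comp (by continuity)).inner continuous_const
  have hftc : ∫ t in (0:ℝ)..1, ⟪F' (x + t • v), v⟫ = F (x + v) - F x := by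
    have := intervalIntegral.integral_eq_sub_of_hasDerivAt
      (f := fun s : ℝ => F (x + s • v)) (fun t _ => line t)
      (hcont.intervalIntegrable 0 1)
    simpa using this
  have hbound : ∫ t in (0:ℝ)..1, ⟪F' (x + t • v), v⟫ ≤
      ∫ t in (0:ℝ)..1, (⟪F' x, v⟫ + L * ‖v‖ ^ 2 * t) := by
    apply intervalIntegral.integral_mono_on zero_le_one
      (hcont.intervalIntegrable 0 1)
      (by apply Continuous.intervalIntegrable; continuity)
    intro t ht
    have h1 : ⟪F' (x + t • v), v⟫ - ⟪F' x, v⟫ = ⟪F' (x + t • v) - F' x, v⟫ := by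
      rw [inner_sub_left]
    have h2 : ⟪F' (x + t • v) - F' x, v⟫ ≤ ‖F' (x + t • v) - F' x‖ * ‖v‖ :=
      real_inner_le_norm _ _
    have h3 : ‖F' (x + t • v) - F' x‖ ≤ L * (t * ‖v‖) := by
      have := hlip.dist_le_mul (x + t • v) x
      rw [dist_eq_norm] at this
      simpa [norm_smul, abs_of_nonneg ht.1, Real.coe_toNNReal _ hL, mul_assoc] using this
    nlinarith [norm_nonneg v, ht.1]
  have hval : ∫ t in (0:ℝ)..1, (⟪F' x, v⟫ + L * ‖v‖ ^ 2 * t) =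
      ⟪F' x, v⟫ + L * ‖v‖ ^ 2 / 2 := by
    rw [intervalIntegral.integral_add (by apply Continuous.intervalIntegrable; continuity)
      (by apply Continuous.intervalIntegrable; continuity),
      intervalIntegral.integral_const, intervalIntegral.integral_const_mul, integral_id]
    simp
    ring
  rw [hftc] at hbound
  rw [hval] at hbound
  nlinarith [norm_nonneg v]

lemma coord_sq_le {n : ℕ} (v : EuclideanSpace ℝ (Fin n)) (i : Fin n) :
    (v i) ^ 2 ≤ ‖v‖ ^ 2 := by
  have h := EuclideanSpace.norm_eq v
  have h2 : ‖v‖ ^ 2 = ∑ j, (v j) ^ 2 := by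
    rw [h, Real.sq_sqrt (by positivity)]
    simp [sq_abs]
  rw [h2]
  exact Finset.single_le_sum (fun j _ => sq_nonneg (v j)) (Finset.mem_univ i)

lemma abs_coord_le {n : ℕ} (v : EuclideanSpace ℝ (Fin n)) (i : Fin n) :
    |v i| ≤ ‖v‖ := by
  have := coord_sq_le v i
  nlinarith [abs_nonneg (v i), norm_nonneg v, sq_abs (v i)]

lemma integral_inner_eq {n : ℕ} {Ω : Type*} {m : MeasurableSpace Ω} {m0 : MeasurableSpace Ω}
    (μ : Measure Ω) [IsProbabilityMeasure μ] (hm : m ≤ m0)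
    (h g : Ω → EuclideanSpace ℝ (Fin n))
    (hhm : StronglyMeasurable[m] h) (hgint : Integrable g μ)
    (hh2 : Integrable (fun ω => ‖h ω‖ ^ 2) μ) (hg2 : Integrable (fun ω => ‖g ω‖ ^ 2) μ)
    (hcond : μ[g|m] =ᵐ[μ] h) :
    ∫ ω, ⟪h ω, g ω⟫ ∂μ = ∫ ω, ‖h ω‖ ^ 2 ∂μ := by
  have hhsm : AEStronglyMeasurable h μ := (hhm.mono hm).aestronglyMeasurable
  have hprod : ∀ (u v : Ω → EuclideanSpace ℝ (Fin n)), AEStronglyMeasurable u μ →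
      AEStronglyMeasurable v μ → Integrable (fun ω => ‖u ω‖ ^ 2) μ →
      Integrable (fun ω => ‖v ω‖ ^ 2) μ → ∀ i : Fin n,
      Integrable (fun ω => u ω i * v ω i) μ := by
    intro u v hu hv hu2 hv2 i
    have hmeas : AEStronglyMeasurable (fun ω => u ω i * v ω i) μ := by
      have h1 : AEStronglyMeasurable (fun ω => u ω i) μ :=
        ((EuclideanSpace.proj i).continuous.comp_aestronglyMeasurable hu)
      have h2 : AEStronglyMeasurable (fun ω => v ω i) μ :=
        ((EuclideanSpace.proj i).continuous.comp_aestronglyMeasurable hv)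
      exact h1.mul h2
    refine (hu2.add hv2).mono' hmeas ?_
    filter_upwards with ω
    simp only [Pi.add_apply]
    have h3 : |u ω i * v ω i| ≤ ‖u ω‖ * ‖v ω‖ := by
      rw [abs_mul]
      exact mul_le_mul (abs_coord_le _ _) (abs_coord_le _ _) (abs_nonneg _) (norm_nonneg _)
    have h5 : ‖u ω‖ * ‖v ω‖ ≤ ‖u ω‖ ^ 2 + ‖v ω‖ ^ 2 := by
      nlinarith [norm_nonneg (u ω), norm_nonneg (v ω)]
    calc ‖u ω i * v ω i‖ = |u ω i * v ω i| := Real.norm_eq_abs _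
      _ ≤ ‖u ω‖ * ‖v ω‖ := h3
      _ ≤ ‖u ω‖ ^ 2 + ‖v ω‖ ^ 2 := h5
  have hgsm : AEStronglyMeasurable g μ := hgint.aestronglyMeasurable
  have hpg := hprod h g hhsm hgsm hh2 hg2
  have hph := hprod h h hhsm hhsm hh2 hh2
  have hcomp : ∀ i : Fin n, (fun ω => h ω i) =ᵐ[μ] μ[fun ω => g ω i|m] := by
    intro i
    have hgi : Integrable (fun ω => g ω i) μ := by
      simpa using ((EuclideanSpace.proj (𝕜 := ℝ) i).integrable_comp hgint)
    refine ae_eq_condExp_of_forall_setIntegral_eq hm hgi ?_ ?_ ?_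
    · intro s _ _
      have : Integrable (fun ω => h ω i) μ := by
        refine (hh2.add (integrable_const 1)).mono'
          ((EuclideanSpace.proj i).continuous.comp_aestronglyMeasurable hhsm) ?_
        filter_upwards with ω
        simp only [Pi.add_apply]
        have hn : ‖h ω‖ ≤ ‖h ω‖ ^ 2 + 1 := by nlinarith [norm_nonneg (h ω)]
        calc ‖h ω i‖ = |h ω i| := Real.norm_eq_abs _
          _ ≤ ‖h ω‖ := abs_coord_le _ _
          _ ≤ ‖h ω‖ ^ 2 + 1 := hn
      exact this.integrableOn
    · intro s hs _
      have hveq : ∫ ω in s, g ω ∂μ = ∫ ω in s, h ω ∂μ := by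
        rw [← setIntegral_condExp hm hgint hs]
        exact integral_congr_ae (ae_restrict_of_ae hcond)
      have h1 : ∫ ω in s, g ω i ∂μ = (∫ ω in s, g ω ∂μ) i := by
        simpa using ((EuclideanSpace.proj (𝕜 := ℝ) i).integral_comp_comm hgint.integrableOn)
      have h2 : ∫ ω in s, h ω i ∂μ = (∫ ω in s, h ω ∂μ) i := by
        have hint : Integrable h μ := by
          refine (hh2.add (integrable_const 1)).mono' hhsm ?_
          filter_upwards with ω
          simp only [Pi.add_apply]
          nlinarith [norm_nonneg (h ω)]
        simpa using ((EuclideanSpace.proj (𝕜 := ℝ) i).integral_comp_comm hint.integrableOn)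
      rw [h1, h2, hveq]
    · exact StronglyMeasurable.aestronglyMeasurable
        ((EuclideanSpace.proj i).continuous.comp_stronglyMeasurable hhm)
  have hcompint : ∀ i : Fin n, ∫ ω, h ω i * g ω i ∂μ = ∫ ω, h ω i * h ω i ∂μ := by
    intro i
    have hhim : StronglyMeasurable[m] (fun ω => h ω i) :=
      (EuclideanSpace.proj i).continuous.comp_stronglyMeasurable hhm
    have hgi : Integrable (fun ω => g ω i) μ := by
      simpa using ((EuclideanSpace.proj (𝕜 := ℝ) i).integrable_comp hgint)
    have hpull := condExp_mul_of_stronglyMeasurable_left (μ := μ) hhim (hpg i) hgi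
    calc ∫ ω, h ω i * g ω i ∂μ = ∫ ω, (μ[(fun ω => h ω i) * (fun ω => g ω i)|m]) ω ∂μ := by
          exact (integral_condExp hm).symm
      _ = ∫ ω, ((fun ω => h ω i) * μ[(fun ω => g ω i)|m]) ω ∂μ := integral_congr_ae hpull
      _ = ∫ ω, h ω i * h ω i ∂μ := by
          refine integral_congr_ae ?_
          filter_upwards [hcomp i] with ω hω
          simp only [Pi.mul_apply]
          rw [← hω]
  have e1 : ∫ ω, ⟪h ω, g ω⟫ ∂μ = ∑ i, ∫ ω, h ω i * g ω i ∂μ := by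
    rw [← integral_finset_sum _ (fun i _ => hpg i)]
    refine integral_congr_ae ?_
    filter_upwards with ω
    simp [PiLp.inner_apply, RCLike.inner_apply]
    exact Finset.sum_congr rfl fun i _ => mul_comm _ _
  have e2 : ∫ ω, ‖h ω‖ ^ 2 ∂μ = ∑ i, ∫ ω, h ω i * h ω i ∂μ := by
    rw [← integral_finset_sum _ (fun i _ => hph i)]
    refine integral_congr_ae ?_
    filter_upwards with ω
    have : ‖h ω‖ ^ 2 = ⟪h ω, h ω⟫ := (real_inner_self_eq_norm_sq (h ω)).symm
    rw [this]
    simp only [PiLp.inner_apply, RCLike.inner_apply, conj_trivial]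
  rw [e1, e2]
  exact Finset.sum_congr rfl (fun i _ => hcompint i)

lemma real_ineq (L α γ₁ γ₂ c I ip Hn En G2 : ℝ)
    (hL : 0 < L) (hα : 0 < α) (hγ₂ : 0 < γ₂) (hγ : γ₂ < γ₁)
    (hc2 : γ₂ ≤ c) (hc1 : c ≤ γ₁)
    (hHn : 0 ≤ Hn) (hEn : 0 ≤ En)
    (hI : I = Hn ^ 2 - ip) (hip : |ip| ≤ Hn * En)
    (hG2 : G2 = 2 * I - Hn ^ 2 + En ^ 2) (hG2n : 0 ≤ G2) :
    -(c * α) * I + L / 2 * ((c * α) ^ 2 * G2) ≤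
      (L * α ^ 2 * γ₁ ^ 2 - α * γ₂) * I
        + (α * (γ₁ - γ₂) * γ₂ / (2 * (γ₁ + γ₂)) - L * α ^ 2 * γ₁ ^ 2 / 2) * Hn ^ 2
        + (α * (γ₁ - γ₂) * (γ₁ + γ₂) / (2 * γ₂) + L * α ^ 2 * γ₁ ^ 2 / 2) * En ^ 2 := by
  have hγ₁ : 0 < γ₁ := hγ₂.trans hγ
  have hc0 : 0 < c := lt_of_lt_of_le hγ₂ hc2
  have hcc : c * c ≤ γ₁ * γ₁ := mul_le_mul hc1 hc1 hc0.le hγ₁.le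
  have hsq : (c * α) ^ 2 ≤ (γ₁ * α) ^ 2 := by
    nlinarith [mul_le_mul_of_nonneg_right hcc (sq_nonneg α)]
  have t1 : L / 2 * ((c * α) ^ 2 * G2) ≤ L * α ^ 2 * γ₁ ^ 2 / 2 * G2 := by
    have := mul_le_mul_of_nonneg_right hsq hG2n
    nlinarith
  have h1 : 0 ≤ c - γ₂ := sub_nonneg.2 hc2
  have h3 : ip ≤ Hn * En := (abs_le.1 hip).2
  have h4 : (c - γ₂) * ip ≤ (γ₁ - γ₂) * (Hn * En) := by nlinarith [mul_nonneg hHn hEn]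
  have t2 : -(c * α) * I ≤ -(α * γ₂) * I + α * (γ₁ - γ₂) * (Hn * En) := by
    have h5 := mul_le_mul_of_nonneg_left h4 hα.le
    rw [hI]
    linarith [h5, mul_nonneg (mul_nonneg hα.le h1) (sq_nonneg Hn)]
  have hP : 0 < γ₁ + γ₂ := by linarith
  have key : 2 * (γ₂ * (γ₁ + γ₂)) * (Hn * En) ≤ γ₂ ^ 2 * Hn ^ 2 + (γ₁ + γ₂) ^ 2 * En ^ 2 := by
    nlinarith [sq_nonneg (γ₂ * Hn - (γ₁ + γ₂) * En)]
  have hco : (0:ℝ) ≤ α * (γ₁ - γ₂) / (2 * (γ₂ * (γ₁ + γ₂))) := by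
    have : (0:ℝ) ≤ γ₁ - γ₂ := by linarith
    positivity
  have t3 : α * (γ₁ - γ₂) * (Hn * En) ≤
      α * (γ₁ - γ₂) * γ₂ / (2 * (γ₁ + γ₂)) * Hn ^ 2
        + α * (γ₁ - γ₂) * (γ₁ + γ₂) / (2 * γ₂) * En ^ 2 := by
    have h := mul_le_mul_of_nonneg_left key hco
    have e1 : α * (γ₁ - γ₂) / (2 * (γ₂ * (γ₁ + γ₂))) * (2 * (γ₂ * (γ₁ + γ₂)) * (Hn * En))
        = α * (γ₁ - γ₂) * (Hn * En) := by field_simp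
    have e2 : α * (γ₁ - γ₂) / (2 * (γ₂ * (γ₁ + γ₂))) * (γ₂ ^ 2 * Hn ^ 2 + (γ₁ + γ₂) ^ 2 * En ^ 2)
        = α * (γ₁ - γ₂) * γ₂ / (2 * (γ₁ + γ₂)) * Hn ^ 2
          + α * (γ₁ - γ₂) * (γ₁ + γ₂) / (2 * γ₂) * En ^ 2 := by
      field_simp
    rw [e1, e2] at h
    exact h
  have hexp : L * α ^ 2 * γ₁ ^ 2 / 2 * G2
      = L * α ^ 2 * γ₁ ^ 2 * I - L * α ^ 2 * γ₁ ^ 2 / 2 * Hn ^ 2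
        + L * α ^ 2 * γ₁ ^ 2 / 2 * En ^ 2 := by rw [hG2]; ring
  linarith [t1, t2, t3, hexp]

end Aux

theorem stmt_12 {n : ℕ} (F : EuclideanSpace ℝ (Fin n) → ℝ)
    (F' : EuclideanSpace ℝ (Fin n) → EuclideanSpace ℝ (Fin n))
    (L Fstar : ℝ) (hL : 0 < L)
    (hgrad : ∀ y, HasGradientAt F (F' y) y)
    (hlip : LipschitzWith (Real.toNNReal L) F')
    (hbdd : ∀ y, Fstar ≤ F y)
    (α γ₁ γ₂ β Mg : ℝ) (hα : 0 < α) (hγ₂ : 0 < γ₂) (hγ : γ₂ < γ₁) (hMg : 0 < Mg)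
    (hαlt : α < γ₂ / (2 * γ₁ ^ 2 * L))
    (hβ : β = (γ₁ ^ 2 - γ₂ ^ 2) / (2 * γ₂) + (1 / 2) * α * γ₁ ^ 2 * L)
    {Ω : Type*} {m0 : MeasurableSpace Ω} (μ : Measure Ω) [IsProbabilityMeasure μ]
    (ℱ : Filtration ℕ m0)
    (x g : ℕ → Ω → EuclideanSpace ℝ (Fin n))
    (hadapted : Adapted ℱ x)
    (hstep : ∀ k ω, x (k + 1) ω = x k ω +
      (if ‖g k ω‖ < 1 / γ₁ then (-(γ₁ * α)) • g k ω
       else if ‖g k ω‖ ≤ 1 / γ₂ then (-(α / ‖g k ω‖)) • g k ω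
       else (-(γ₂ * α)) • g k ω))
    (hintg : ∀ k, Integrable (g k) μ)
    (hintF : ∀ k, Integrable (fun ω => F (x k ω)) μ)
    (hint2 : ∀ k, Integrable (fun ω => ‖F' (x k ω) - g k ω‖ ^ 2) μ)
    (hintgrad : ∀ k, Integrable (fun ω => ‖F' (x k ω)‖ ^ 2) μ)
    (hunbiased : ∀ k, μ[g k | ℱ k] =ᵐ[μ] fun ω => F' (x k ω))
    (hvar : ∀ k, ∀ᵐ ω ∂μ, (μ[fun ω' => ‖F' (x k ω') - g k ω'‖ ^ 2 | ℱ k]) ω < Mg) :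
    ∀ K : ℕ, 1 ≤ K →
      (∫ ω, (1 / (K : ℝ)) * ∑ k ∈ Finset.Icc 1 K, ‖F' (x k ω)‖ ^ 2 ∂μ) ≤
        4 * ((∫ ω, F (x 1 ω) ∂μ) - Fstar) / ((K : ℝ) * α * γ₂)
          + 4 * β * Mg / γ₂ := by
  have hγ₁ : 0 < γ₁ := hγ₂.trans hγ
  obtain ⟨a, ha⟩ : ∃ a : ℝ, a = L * α ^ 2 * γ₁ ^ 2 - α * γ₂ := ⟨_, rfl⟩
  obtain ⟨b, hb⟩ : ∃ b : ℝ, b = α * (γ₁ - γ₂) * γ₂ / (2 * (γ₁ + γ₂)) - L * α ^ 2 * γ₁ ^ 2 / 2 :=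
    ⟨_, rfl⟩
  obtain ⟨d, hd⟩ : ∃ d : ℝ, d = α * (γ₁ - γ₂) * (γ₁ + γ₂) / (2 * γ₂) + L * α ^ 2 * γ₁ ^ 2 / 2 :=
    ⟨_, rfl⟩
  have hαL : α * γ₁ ^ 2 * L < γ₂ / 2 := by
    rw [lt_div_iff₀ (by positivity)] at hαlt
    nlinarith
  -- measurability / integrability
  have hle : ∀ k, (ℱ k : MeasurableSpace Ω) ≤ m0 := fun k => ℱ.le k
  have hxm : ∀ k, StronglyMeasurable[ℱ k] (fun ω => F' (x k ω)) :=
    fun k => hlip.continuous.comp_stronglyMeasurable (hadapted k).stronglyMeasurable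
  have hhsm : ∀ k, AEStronglyMeasurable (fun ω => F' (x k ω)) μ :=
    fun k => ((hxm k).mono (hle k)).aestronglyMeasurable
  have hg2 : ∀ k, Integrable (fun ω => ‖g k ω‖ ^ 2) μ := by
    intro k
    refine (((hint2 k).const_mul 2).add ((hintgrad k).const_mul 2)).mono' ?_ ?_
    · have h1 : AEStronglyMeasurable (fun ω => ‖g k ω‖) μ :=
        (hintg k).aestronglyMeasurable.norm
      simpa [pow_two, Pi.mul_def] using h1.mul h1
    · filter_upwards with ω
      simp only [Pi.add_apply]
      have h7 : ‖g k ω‖ ≤ ‖F' (x k ω)‖ + ‖F' (x k ω) - g k ω‖ := by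
        have h8 : F' (x k ω) - (F' (x k ω) - g k ω) = g k ω := sub_sub_cancel _ _
        calc ‖g k ω‖ = ‖F' (x k ω) - (F' (x k ω) - g k ω)‖ := by rw [h8]
          _ ≤ ‖F' (x k ω)‖ + ‖F' (x k ω) - g k ω‖ := norm_sub_le _ _
      have h9 : ‖(‖g k ω‖ ^ 2 : ℝ)‖ = ‖g k ω‖ ^ 2 := by
        rw [Real.norm_eq_abs, abs_of_nonneg (sq_nonneg _)]
      rw [h9]
      nlinarith [mul_self_le_mul_self (norm_nonneg (g k ω)) h7,
        sq_nonneg (‖F' (x k ω)‖ - ‖F' (x k ω) - g k ω‖)]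
  have hinner : ∀ k, Integrable (fun ω => ⟪F' (x k ω), g k ω⟫) μ := by
    intro k
    refine ((hintgrad k).add (hg2 k)).mono'
      ((hhsm k).inner (hintg k).aestronglyMeasurable) ?_
    filter_upwards with ω
    simp only [Pi.add_apply]
    have h1 := abs_real_inner_le_norm (F' (x k ω)) (g k ω)
    have h2 : ‖F' (x k ω)‖ * ‖g k ω‖ ≤ ‖F' (x k ω)‖ ^ 2 + ‖g k ω‖ ^ 2 := by
      nlinarith [norm_nonneg (F' (x k ω)), norm_nonneg (g k ω)]
    calc ‖⟪F' (x k ω), g k ω⟫‖ = |⟪F' (x k ω), g k ω⟫| := Real.norm_eq_abs _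
      _ ≤ ‖F' (x k ω)‖ * ‖g k ω‖ := h1
      _ ≤ ‖F' (x k ω)‖ ^ 2 + ‖g k ω‖ ^ 2 := h2
  -- key expectation identities
  have hIeq : ∀ k, ∫ ω, ⟪F' (x k ω), g k ω⟫ ∂μ = ∫ ω, ‖F' (x k ω)‖ ^ 2 ∂μ :=
    fun k => integral_inner_eq μ (hle k) _ (g k) (hxm k) (hintg k) (hintgrad k)
      (hg2 k) (hunbiased k)
  have hE : ∀ k, ∫ ω, ‖F' (x k ω) - g k ω‖ ^ 2 ∂μ ≤ Mg := by
    intro k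
    have h1 : ∫ ω, ‖F' (x k ω) - g k ω‖ ^ 2 ∂μ
        = ∫ ω, (μ[fun ω' => ‖F' (x k ω') - g k ω'‖ ^ 2|ℱ k]) ω ∂μ :=
      (integral_condExp (hle k)).symm
    rw [h1]
    calc ∫ ω, (μ[fun ω' => ‖F' (x k ω') - g k ω'‖ ^ 2|ℱ k]) ω ∂μ
        ≤ ∫ _, Mg ∂μ := integral_mono_ae integrable_condExp (integrable_const Mg)
          ((hvar k).mono fun ω h => h.le)
      _ = Mg := by simp
  -- pointwise descent
  have hpoint : ∀ k ω, F (x (k + 1) ω) ≤ F (x k ω) + a * ⟪F' (x k ω), g k ω⟫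
      + b * ‖F' (x k ω)‖ ^ 2 + d * ‖F' (x k ω) - g k ω‖ ^ 2 := by
    intro k ω
    obtain ⟨c, hc2, hc1, hxeq⟩ : ∃ c, γ₂ ≤ c ∧ c ≤ γ₁ ∧
        x (k + 1) ω = x k ω + (-(c * α)) • g k ω := by
      rw [hstep k ω]
      split_ifs with h1 h2
      · exact ⟨γ₁, hγ.le, le_refl _, rfl⟩
      · have hg0 : 0 < ‖g k ω‖ := lt_of_lt_of_le (by positivity) (not_lt.mp h1)
        refine ⟨1 / ‖g k ω‖, ?_, ?_, ?_⟩
        · rw [le_div_iff₀ hg0]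
          rw [le_div_iff₀ hγ₂] at h2
          linarith
        · rw [div_le_iff₀ hg0]
          have h1' := not_lt.mp h1
          rw [div_le_iff₀ hγ₁] at h1'
          linarith [h1']
        · congr 1
          rw [show (1 / ‖g k ω‖) * α = α / ‖g k ω‖ by ring]
      · exact ⟨γ₂, le_refl _, hγ.le, rfl⟩
    rw [hxeq]
    have hdes := descent_lemma F F' L hL.le hgrad hlip (x k ω) ((-(c * α)) • g k ω)
    have hc0 : 0 < c := lt_of_lt_of_le hγ₂ hc2
    have e1 : ⟪F' (x k ω), (-(c * α)) • g k ω⟫ = -(c * α) * ⟪F' (x k ω), g k ω⟫ :=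
      real_inner_smul_right _ _ _
    have e2 : ‖(-(c * α)) • g k ω‖ ^ 2 = (c * α) ^ 2 * ‖g k ω‖ ^ 2 := by
      rw [norm_smul, Real.norm_eq_abs, abs_neg, abs_of_nonneg (by positivity : (0:ℝ) ≤ c * α)]
      ring
    have hIdef : ⟪F' (x k ω), g k ω⟫ = ‖F' (x k ω)‖ ^ 2 - ⟪F' (x k ω), F' (x k ω) - g k ω⟫ := by
      rw [inner_sub_right, real_inner_self_eq_norm_sq]
      ring
    have hipb : |⟪F' (x k ω), F' (x k ω) - g k ω⟫| ≤ ‖F' (x k ω)‖ * ‖F' (x k ω) - g k ω‖ :=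
      abs_real_inner_le_norm _ _
    have hG2e : ‖g k ω‖ ^ 2 = ‖F' (x k ω)‖ ^ 2 - 2 * ⟪F' (x k ω), F' (x k ω) - g k ω⟫
        + ‖F' (x k ω) - g k ω‖ ^ 2 := by
      have h := norm_sub_sq_real (F' (x k ω)) (F' (x k ω) - g k ω)
      rw [sub_sub_cancel] at h
      exact h
    have hri := real_ineq L α γ₁ γ₂ c ⟪F' (x k ω), g k ω⟫
      ⟪F' (x k ω), F' (x k ω) - g k ω⟫ ‖F' (x k ω)‖ ‖F' (x k ω) - g k ω‖ (‖g k ω‖ ^ 2)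
      hL hα hγ₂ hγ hc2 hc1 (norm_nonneg _) (norm_nonneg _) hIdef hipb
      (by rw [hG2e, hIdef]; ring) (sq_nonneg _)
    rw [e1, e2] at hdes
    rw [ha, hb, hd]
    calc F (x k ω + (-(c * α)) • g k ω)
        ≤ F (x k ω) + -(c * α) * ⟪F' (x k ω), g k ω⟫
          + L / 2 * ((c * α) ^ 2 * ‖g k ω‖ ^ 2) := by linarith [hdes]
      _ ≤ _ := by linarith [hri]
  -- integrated one step bound
  have hstepInt : ∀ k, ∫ ω, F (x (k + 1) ω) ∂μ ≤ ∫ ω, F (x k ω) ∂μ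
      - α * γ₂ / 4 * ∫ ω, ‖F' (x k ω)‖ ^ 2 ∂μ + α * β * Mg := by
    intro k
    have hint1 : Integrable (fun ω => F (x k ω) + a * ⟪F' (x k ω), g k ω⟫) μ :=
      (hintF k).add ((hinner k).const_mul a)
    have hint2' : Integrable (fun ω => F (x k ω) + a * ⟪F' (x k ω), g k ω⟫
        + b * ‖F' (x k ω)‖ ^ 2) μ := hint1.add ((hintgrad k).const_mul b)
    have hint3 : Integrable (fun ω => F (x k ω) + a * ⟪F' (x k ω), g k ω⟫
        + b * ‖F' (x k ω)‖ ^ 2 + d * ‖F' (x k ω) - g k ω‖ ^ 2) μ :=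
      hint2'.add ((hint2 k).const_mul d)
    have h8 : ∫ ω, F (x (k + 1) ω) ∂μ ≤ ∫ ω, (F (x k ω) + a * ⟪F' (x k ω), g k ω⟫
        + b * ‖F' (x k ω)‖ ^ 2 + d * ‖F' (x k ω) - g k ω‖ ^ 2) ∂μ :=
      integral_mono (hintF (k + 1)) hint3 (fun ω => hpoint k ω)
    have hsplit : ∫ ω, (F (x k ω) + a * ⟪F' (x k ω), g k ω⟫
        + b * ‖F' (x k ω)‖ ^ 2 + d * ‖F' (x k ω) - g k ω‖ ^ 2) ∂μ
        = ∫ ω, F (x k ω) ∂μ + a * ∫ ω, ⟪F' (x k ω), g k ω⟫ ∂μ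
          + b * ∫ ω, ‖F' (x k ω)‖ ^ 2 ∂μ + d * ∫ ω, ‖F' (x k ω) - g k ω‖ ^ 2 ∂μ := by
      rw [integral_add hint2' ((hint2 k).const_mul d),
        integral_add hint1 ((hintgrad k).const_mul b),
        integral_add (hintF k) ((hinner k).const_mul a),
        integral_const_mul, integral_const_mul, integral_const_mul]
    have hH0 : 0 ≤ ∫ ω, ‖F' (x k ω)‖ ^ 2 ∂μ := integral_nonneg fun ω => sq_nonneg _
    have hd0 : 0 ≤ d := by
      rw [hd]
      have h1 : (0:ℝ) ≤ α * (γ₁ - γ₂) * (γ₁ + γ₂) / (2 * γ₂) := by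
        apply div_nonneg _ (by positivity)
        apply mul_nonneg (mul_nonneg hα.le (by linarith)) (by linarith)
      have h2 : (0:ℝ) ≤ L * α ^ 2 * γ₁ ^ 2 / 2 := by positivity
      linarith
    have hdβ : d = α * β := by
      rw [hd, hβ]
      field_simp
      ring
    have hE0 : d * ∫ ω, ‖F' (x k ω) - g k ω‖ ^ 2 ∂μ ≤ α * β * Mg := by
      rw [← hdβ]
      exact mul_le_mul_of_nonneg_left (hE k) hd0
    have hcoef : a + b ≤ -(α * γ₂ / 4) := by
      rw [ha, hb]
      have h5 : L * α ^ 2 * γ₁ ^ 2 / 2 ≤ α * γ₂ / 4 := by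
        nlinarith [mul_lt_mul_of_pos_left hαL hα]
      have h6 : α * (γ₁ - γ₂) * γ₂ / (2 * (γ₁ + γ₂)) ≤ α * γ₂ / 2 := by
        rw [div_le_div_iff₀ (by positivity) (by norm_num)]
        nlinarith [mul_pos hα hγ₂]
      linarith
    have hcomb : a * ∫ ω, ‖F' (x k ω)‖ ^ 2 ∂μ + b * ∫ ω, ‖F' (x k ω)‖ ^ 2 ∂μ
        ≤ -(α * γ₂ / 4) * ∫ ω, ‖F' (x k ω)‖ ^ 2 ∂μ := by
      nlinarith [mul_le_mul_of_nonneg_right hcoef hH0]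
    rw [hsplit, hIeq k] at h8
    linarith [h8, hcomb, hE0]
  -- telescoping
  have htel : ∀ K : ℕ, ∫ ω, F (x (K + 1) ω) ∂μ
      + α * γ₂ / 4 * ∑ k ∈ Finset.Icc 1 K, ∫ ω, ‖F' (x k ω)‖ ^ 2 ∂μ
      ≤ ∫ ω, F (x 1 ω) ∂μ + (K : ℝ) * (α * β * Mg) := by
    intro K
    induction K with
    | zero => simp
    | succ K ih =>
      rw [Finset.sum_Icc_succ_top (by omega : 1 ≤ K + 1)]
      have hs := hstepInt (K + 1)
      push_cast
      push_cast at ih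
      nlinarith [hs, ih]
  -- conclusion
  intro K hK
  have hKpos : (0:ℝ) < (K : ℝ) := by exact_mod_cast Nat.pos_of_ne_zero (by omega)
  have hLHS : (∫ ω, (1 / (K : ℝ)) * ∑ k ∈ Finset.Icc 1 K, ‖F' (x k ω)‖ ^ 2 ∂μ)
      = (1 / (K : ℝ)) * ∑ k ∈ Finset.Icc 1 K, ∫ ω, ‖F' (x k ω)‖ ^ 2 ∂μ := by
    rw [integral_const_mul, integral_finset_sum _ (fun k _ => hintgrad k)]
  have hFK : Fstar ≤ ∫ ω, F (x (K + 1) ω) ∂μ := by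
    calc Fstar = ∫ _, Fstar ∂μ := by simp
      _ ≤ ∫ ω, F (x (K + 1) ω) ∂μ :=
        integral_mono (integrable_const Fstar) (hintF (K + 1)) fun ω => hbdd _
  have hteleK := htel K
  set S : ℝ := ∑ k ∈ Finset.Icc 1 K, ∫ ω, ‖F' (x k ω)‖ ^ 2 ∂μ with hS
  have hC : (0:ℝ) < α * γ₂ / 4 := by positivity
  have key2 : S ≤ ((∫ ω, F (x 1 ω) ∂μ) - Fstar + (K : ℝ) * (α * β * Mg)) / (α * γ₂ / 4) := by
    rw [le_div_iff₀ hC]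
    nlinarith [hteleK, hFK]
  rw [hLHS]
  calc (1 / (K : ℝ)) * S
      ≤ (1 / (K : ℝ)) * (((∫ ω, F (x 1 ω) ∂μ) - Fstar + (K : ℝ) * (α * β * Mg))
          / (α * γ₂ / 4)) := by
        exact mul_le_mul_of_nonneg_left key2 (by positivity)
    _ = 4 * ((∫ ω, F (x 1 ω) ∂μ) - Fstar) / ((K : ℝ) * α * γ₂) + 4 * β * Mg / γ₂ := by
        field_simp
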